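/- Let C ∈ ℝ^{V×k} and W ∈ ℝ^{k×d} be column-stochastic, with C of full column rank k, and suppose W satisfies the separability condition. Then the pair (C, W) is identifiable. -/

import Mathlib

open scoped BigOperators ENNReal NNReal
open MeasureTheory Matrix

noncomputable section

/-- Euclidean (ℓ²) norm of a vector in `Fin m → ℝ`. -/
def l2 {m : ℕ} (x : Fin m → ℝ) : ℝ := Real.sqrt (∑ i, x i ^ 2)

/-- The `f`-th standard basis vector of `ℝ^k`. -/
def eVec (k : ℕ) (f : Fin k) : Fin k → ℝ := fun i => if i = f then 1 else 0

/-- A matrix is column-stochastic: nonnegative entries, columns summing to one. -/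
def colStoch {p q : ℕ} (A : Matrix (Fin p) (Fin q) ℝ) : Prop :=
  (∀ i j, 0 ≤ A i j) ∧ ∀ j, ∑ i, A i j = 1

/-- Separability: after a column permutation, the first `k` columns form the identity. -/
def Separable {k d : ℕ} (W : Matrix (Fin k) (Fin d) ℝ) : Prop :=
  ∃ g : Fin k → Fin d, Function.Injective g ∧
    ∀ i j : Fin k, W i (g j) = if i = j then 1 else 0

/-- The columns of a matrix, viewed as points of Euclidean space. -/
def cols {p q : ℕ} (A : Matrix (Fin p) (Fin q) ℝ) : Set (EuclideanSpace ℝ (Fin p)) :=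
  Set.range fun j : Fin q => (WithLp.toLp 2 (fun i => A i j) : EuclideanSpace ℝ (Fin p))

/-- `|conv(A)|`: the (q-1)-dimensional Hausdorff measure of the convex hull of the columns. -/
def convVol {p q : ℕ} (A : Matrix (Fin p) (Fin q) ℝ) : ℝ≥0∞ :=
  μH[(q : ℝ) - 1] (convexHull ℝ (cols A))

/-- Spectral norm (largest singular value) of a matrix. -/
def specNorm {p q : ℕ} (A : Matrix (Fin p) (Fin q) ℝ) : ℝ :=
  ‖LinearMap.toContinuousLinearMap (Matrix.toEuclideanLin A)‖

/-- `dis(C, C̄)`: minimum over column permutations of the spectral norm of the difference. -/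
def dis {p q : ℕ} (C Cb : Matrix (Fin p) (Fin q) ℝ) : ℝ :=
  ⨅ σ : Equiv.Perm (Fin q), specNorm (Cb - C.submatrix id ⇑σ)

/-- Identifiability of `(C, W)` under the minimum volume constraint. -/
def Identifiable {V k d : ℕ} (C : Matrix (Fin V) (Fin k) ℝ)
    (W : Matrix (Fin k) (Fin d) ℝ) : Prop :=
  ∀ (Cb : Matrix (Fin V) (Fin k) ℝ) (Wb : Matrix (Fin k) (Fin d) ℝ),
    colStoch Cb → colStoch Wb → C * W = Cb * Wb → convVol Cb ≤ convVol C →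
    dis C Cb = 0


/-! ### Auxiliary lemmas -/

lemma specNorm_zero {p q : ℕ} : specNorm (0 : Matrix (Fin p) (Fin q) ℝ) = 0 := by
  simp [specNorm]

lemma dis_zero {p q : ℕ} (C Cb : Matrix (Fin p) (Fin q) ℝ)
    (h : ∃ σ : Equiv.Perm (Fin q), Cb = C.submatrix id ⇑σ) : dis C Cb = 0 := by
  obtain ⟨σ, hσ⟩ := h
  have h0 : ∀ τ : Equiv.Perm (Fin q), 0 ≤ specNorm (Cb - C.submatrix id ⇑τ) :=
    fun τ => norm_nonneg _
  refine le_antisymm ?_ (le_ciInf h0)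
  have hz : specNorm (Cb - C.submatrix id ⇑σ) = 0 := by
    rw [hσ, sub_self]; exact specNorm_zero
  calc dis C Cb ≤ specNorm (Cb - C.submatrix id ⇑σ) :=
        ciInf_le ⟨0, by rintro x ⟨τ, rfl⟩; exact h0 τ⟩ σ
    _ = 0 := hz

lemma stoch_inv_perm {k : ℕ} {B A : Matrix (Fin k) (Fin k) ℝ} (hB : colStoch B)
    (hA : colStoch A) (h : B * A = 1) :
    ∃ σ : Equiv.Perm (Fin k), ∀ i l, B i l = if i = σ l then 1 else 0 := by
  classical
  have hf : ∀ j : Fin k, ∃ l, 0 < A l j := by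
    intro j
    by_contra hc
    push_neg at hc
    have : ∑ l, A l j = 0 := Finset.sum_eq_zero fun l _ => le_antisymm (hc l) (hA.1 l j)
    rw [hA.2 j] at this; norm_num at this
  choose f hfpos using hf
  have hcol : ∀ j m, m ≠ j → B m (f j) = 0 := by
    intro j m hmj
    have hzero : ∑ l, B m l * A l j = 0 := by
      have := congrFun (congrFun h m) j
      simpa [Matrix.mul_apply, Matrix.one_apply, hmj] using this
    have hterm := (Finset.sum_eq_zero_iff_of_nonneg
      (fun l _ => mul_nonneg (hB.1 m l) (hA.1 l j))).mp hzero (f j) (Finset.mem_univ _)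
    rcases mul_eq_zero.mp hterm with h1 | h2
    · exact h1
    · exact absurd h2 (ne_of_gt (hfpos j))
  have hdiag : ∀ j, B j (f j) = 1 := by
    intro j
    have := hB.2 (f j)
    rwa [Finset.sum_eq_single j (fun m _ hm => hcol j m hm) (by simp)] at this
  have hinj : Function.Injective f := by
    intro j j' hjj'
    by_contra hne
    have h1 : B j (f j') = 0 := hcol j' j hne
    rw [← hjj', hdiag j] at h1; norm_num at h1
  let e := Equiv.ofBijective f (Finite.injective_iff_bijective.mp hinj)
  refine ⟨e.symm, fun i l => ?_⟩
  have hl : f (e.symm l) = l := e.apply_symm_apply l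
  by_cases hi : i = e.symm l
  · subst hi; rw [if_pos rfl]
    have := hdiag (e.symm l); rwa [hl] at this
  · rw [if_neg hi]
    have := hcol (e.symm l) i hi; rwa [hl] at this

lemma muH_pi_real {m : ℕ} : (μH[(m:ℝ)] : Measure (Fin m → ℝ)) = volume := by
  have := hausdorffMeasure_pi_real (ι := Fin m)
  simpa using this

lemma muH_pos {m : ℕ} {U : Set (EuclideanSpace ℝ (Fin m))} (hU : IsOpen U)
    (hne : U.Nonempty) : 0 < μH[(m:ℝ)] U := by
  set e := WithLp.equiv 2 (Fin m → ℝ)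
  have hlip : LipschitzWith 1 e := PiLp.lipschitzWith_ofLp 2 _
  have himg := hlip.hausdorffMeasure_image_le (d := (m:ℝ)) (by positivity) U
  rw [muH_pi_real] at himg
  have hopen : IsOpen (e '' U) := by
    rw [Equiv.image_eq_preimage_symm]
    exact hU.preimage (PiLp.continuous_toLp 2 _)
  have hpos : 0 < volume (e '' U) := hopen.measure_pos volume (hne.image e)
  calc (0:ℝ≥0∞) < volume (e '' U) := hpos
    _ ≤ ((1:ℝ≥0):ℝ≥0∞) ^ (m:ℝ) * μH[(m:ℝ)] U := himg
    _ = μH[(m:ℝ)] U := by simp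

lemma muH_lt_top {m : ℕ} {s : Set (EuclideanSpace ℝ (Fin m))} (hs : IsCompact s) :
    μH[(m:ℝ)] s < ⊤ := by
  set e := WithLp.equiv 2 (Fin m → ℝ)
  have hanti : AntilipschitzWith _ e := PiLp.antilipschitzWith_ofLp 2 _
  have hlipsymm : LipschitzWith _ e.symm := hanti.to_rightInverse e.right_inv
  have hset : s = e.symm '' (e '' s) := by
    rw [Set.image_image]; simp
  have himg := hlipsymm.hausdorffMeasure_image_le (d := (m:ℝ)) (by positivity) (e '' s)
  have hcpt : IsCompact (e '' s) := hs.image (PiLp.continuous_ofLp 2 _)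
  have hfin : volume (e '' s) < ⊤ := hcpt.measure_lt_top
  rw [muH_pi_real] at himg
  calc μH[(m:ℝ)] s = μH[(m:ℝ)] (e.symm '' (e '' s)) := by rw [← hset]
    _ ≤ _ * volume (e '' s) := himg
    _ < ⊤ := ENNReal.mul_lt_top
        (ENNReal.rpow_lt_top_of_nonneg (by positivity) ENNReal.coe_ne_top) hfin

lemma geom {m : ℕ} {K L : Set (EuclideanSpace ℝ (Fin m))}
    (hKconv : Convex ℝ K) (hKcpt : IsCompact K) (hKint : (interior K).Nonempty)
    (hLconv : Convex ℝ L) (hKL : K ⊆ L)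
    (hμ : μH[(m:ℝ)] L ≤ μH[(m:ℝ)] K) : L ⊆ K := by
  intro b hbL
  by_contra hbK
  obtain ⟨f, u, hfu, hub⟩ := geometric_hahn_banach_closed_point hKconv hKcpt.isClosed hbK
  obtain ⟨x, hx⟩ := hKint
  obtain ⟨ε, hε, hball⟩ := Metric.isOpen_iff.mp isOpen_interior x hx
  have hballK : Metric.ball x ε ⊆ K := hball.trans interior_subset
  set m' : ℝ := f x - ‖f‖ * ε with hm'
  have hlb : ∀ z ∈ Metric.ball x ε, m' ≤ f z := by
    intro z hz
    have h1 : ‖f z - f x‖ ≤ ‖f‖ * ε := by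
      have h2 := f.le_opNorm (z - x)
      rw [map_sub] at h2
      have hzx : ‖z - x‖ ≤ ε := le_of_lt (by rwa [Metric.mem_ball, dist_eq_norm] at hz)
      calc ‖f z - f x‖ ≤ ‖f‖ * ‖z - x‖ := h2
        _ ≤ ‖f‖ * ε := by gcongr
    have := abs_le.mp (by rwa [Real.norm_eq_abs] at h1)
    simp only [hm']; linarith [this.1]
  have hxK : x ∈ K := interior_subset hx
  have hxu : f x < u := hfu x hxK
  have hm'x : m' ≤ f x := by
    have : 0 ≤ ‖f‖ * ε := mul_nonneg (norm_nonneg f) (le_of_lt hε)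
    simp only [hm']; linarith
  have hM : (0:ℝ) < f b - m' := by linarith
  set t : ℝ := (f b - u) / (2 * (f b - m')) with ht
  have ht0 : 0 < t := div_pos (by linarith) (by linarith)
  have ht1 : t < 1 := by
    rw [ht, div_lt_one (by linarith)]; linarith
  have htM : t * (f b - m') = (f b - u) / 2 := by
    rw [ht]; field_simp
  have hfS : ∀ z ∈ Metric.ball x ε, u < f (b + t • (z - b)) := by
    intro z hz
    have h2 : f (b + t • (z - b)) = f b + t * (f z - f b) := by
      rw [map_add, _root_.map_smul, map_sub]; simp [smul_eq_mul]
    have hm'z := hlb z hz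
    have h3 : t * m' ≤ t * f z := mul_le_mul_of_nonneg_left hm'z (le_of_lt ht0)
    rw [h2]; nlinarith
  -- the ball S
  set c : EuclideanSpace ℝ (Fin m) := b + t • (x - b) with hc
  set S : Set (EuclideanSpace ℝ (Fin m)) := Metric.ball c (t * ε) with hS
  have hrep : ∀ p ∈ S, ∃ z ∈ Metric.ball x ε, p = b + t • (z - b) := by
    intro p hp
    refine ⟨x + t⁻¹ • (p - c), ?_, ?_⟩
    · rw [Metric.mem_ball, dist_eq_norm]
      have h4 : x + t⁻¹ • (p - c) - x = t⁻¹ • (p - c) := by abel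
      rw [h4, norm_smul, Real.norm_eq_abs, abs_of_pos (inv_pos.mpr ht0)]
      have h5 : ‖p - c‖ < t * ε := by rwa [Metric.mem_ball, dist_eq_norm] at hp
      calc t⁻¹ * ‖p - c‖ < t⁻¹ * (t * ε) := by
            exact mul_lt_mul_of_pos_left h5 (inv_pos.mpr ht0)
        _ = ε := by field_simp
    · have h6 : x + t⁻¹ • (p - c) - b = (x - b) + t⁻¹ • (p - c) := by abel
      rw [h6, smul_add, smul_inv_smul₀ (ne_of_gt ht0)]
      rw [hc]; abel
  have hSL : S ⊆ L := by
    intro p hp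
    obtain ⟨z, hz, rfl⟩ := hrep p hp
    have hzL : z ∈ L := hKL (hballK hz)
    have heq : b + t • (z - b) = (1 - t) • b + t • z := by
      rw [smul_sub, sub_smul, one_smul]; abel
    rw [heq]
    exact hLconv hbL hzL (by linarith) (le_of_lt ht0) (by ring)
  have hSK : Disjoint K S := by
    rw [Set.disjoint_right]
    intro p hp hpK
    obtain ⟨z, hz, rfl⟩ := hrep p hp
    exact absurd (hfu _ hpK) (not_lt.mpr (le_of_lt (hfS z hz)))
  have hSpos : 0 < μH[(m:ℝ)] S :=
    muH_pos Metric.isOpen_ball (Metric.nonempty_ball.mpr (by positivity))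
  have hKfin : μH[(m:ℝ)] K < ⊤ := muH_lt_top hKcpt
  have hadd : μH[(m:ℝ)] K + μH[(m:ℝ)] S = μH[(m:ℝ)] (K ∪ S) :=
    (measure_union hSK Metric.isOpen_ball.measurableSet).symm
  have hle : μH[(m:ℝ)] K + μH[(m:ℝ)] S ≤ μH[(m:ℝ)] K := by
    rw [hadd]
    exact le_trans (measure_mono (Set.union_subset hKL hSL)) hμ
  have : μH[(m:ℝ)] S ≤ 0 := by
    have h7 : μH[(m:ℝ)] K + μH[(m:ℝ)] S ≤ μH[(m:ℝ)] K + 0 := by simpa using hle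
    exact (ENNReal.add_le_add_iff_left hKfin.ne).mp h7
  exact absurd (le_antisymm this zero_le) (ne_of_gt hSpos)

lemma key_subset {V m : ℕ} (p q : Fin (m+1) → EuclideanSpace ℝ (Fin V))
    (hp : AffineIndependent ℝ p) (hpq : Set.range p ⊆ convexHull ℝ (Set.range q))
    (hvol : μH[(m:ℝ)] (convexHull ℝ (Set.range q)) ≤ μH[(m:ℝ)] (convexHull ℝ (Set.range p))) :
    Set.range q ⊆ convexHull ℝ (Set.range p) := by
  classical
  set A : AffineSubspace ℝ (EuclideanSpace ℝ (Fin V)) := affineSpan ℝ (Set.range q) with hA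
  have hqA : Set.range q ⊆ (A : Set (EuclideanSpace ℝ (Fin V))) := subset_affineSpan ℝ _
  have hconvqA : convexHull ℝ (Set.range q) ⊆ (A : Set (EuclideanSpace ℝ (Fin V))) :=
    convexHull_min hqA (AffineSubspace.convex A)
  have hpA : Set.range p ⊆ (A : Set (EuclideanSpace ℝ (Fin V))) := hpq.trans hconvqA
  -- dimension of A.direction
  have hd1 : Module.finrank ℝ (vectorSpan ℝ (Set.range p)) = m :=
    hp.finrank_vectorSpan (by simp)
  have hle : vectorSpan ℝ (Set.range p) ≤ A.direction := by
    rw [← direction_affineSpan]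
    exact AffineSubspace.direction_le (affineSpan_le.mpr hpA)
  have hdirA : A.direction = vectorSpan ℝ (Set.range q) := direction_affineSpan ℝ _
  have hd2 : Module.finrank ℝ A.direction ≤ m := by
    rw [hdirA]
    exact finrank_vectorSpan_range_le ℝ q (by simp)
  have hdA : Module.finrank ℝ A.direction = m :=
    le_antisymm hd2 (hd1 ▸ Submodule.finrank_mono hle)
  set D := A.direction with hD
  let B0 : OrthonormalBasis (Fin m) ℝ D :=
    (stdOrthonormalBasis ℝ D).reindex (finCongr hdA)
  let Φ : EuclideanSpace ℝ (Fin m) ≃ₗᵢ[ℝ] D := B0.repr.symm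
  have hc0 : q 0 ∈ A := hqA (Set.mem_range_self 0)
  set c0 : EuclideanSpace ℝ (Fin V) := q 0
  set φ : EuclideanSpace ℝ (Fin m) → EuclideanSpace ℝ (Fin V) := fun y => c0 + (Φ y : EuclideanSpace ℝ (Fin V)) with hφ
  have hiso : Isometry φ := by
    apply Isometry.of_dist_eq
    intro y1 y2
    have h1 : dist (φ y1) (φ y2) = dist ((Φ y1 : EuclideanSpace ℝ (Fin V))) (Φ y2) := by
      simp [hφ]
    rw [h1, ← Subtype.dist_eq, Φ.dist_map]
  have hφinj : Function.Injective φ := hiso.injective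
  -- affine map structure
  set φL : EuclideanSpace ℝ (Fin m) →ₗ[ℝ] EuclideanSpace ℝ (Fin V) :=
    D.subtype.comp (Φ.toLinearEquiv : EuclideanSpace ℝ (Fin m) →ₗ[ℝ] D) with hφL
  set φA : EuclideanSpace ℝ (Fin m) →ᵃ[ℝ] EuclideanSpace ℝ (Fin V) := AffineMap.mk' φ φL 0 (by
    intro p'
    simp [hφ, hφL, vadd_eq_add, vsub_eq_sub]
    abel) with hφA
  have hφAcoe : (φA : EuclideanSpace ℝ (Fin m) → EuclideanSpace ℝ (Fin V)) = φ := rfl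
  -- preimages of the points
  have hmemp : ∀ j, p j - c0 ∈ D := fun j =>
    AffineSubspace.vsub_mem_direction (hpA (Set.mem_range_self j)) hc0
  have hmemq : ∀ j, q j - c0 ∈ D := fun j =>
    AffineSubspace.vsub_mem_direction (hqA (Set.mem_range_self j)) hc0
  set y : Fin (m+1) → EuclideanSpace ℝ (Fin m) := fun j => Φ.symm ⟨p j - c0, hmemp j⟩
  set z : Fin (m+1) → EuclideanSpace ℝ (Fin m) := fun j => Φ.symm ⟨q j - c0, hmemq j⟩
  have hy : ∀ j, φ (y j) = p j := by
    intro j; simp only [hφ, y, Φ.apply_symm_apply]; abel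
  have hz : ∀ j, φ (z j) = q j := by
    intro j; simp only [hφ, z, Φ.apply_symm_apply]; abel
  have hcompy : φ ∘ y = p := funext hy
  have hcompz : φ ∘ z = q := funext hz
  -- convex hull images
  have himg_p : φ '' convexHull ℝ (Set.range y) = convexHull ℝ (Set.range p) := by
    rw [← hφAcoe, AffineMap.image_convexHull, ← Set.range_comp, hφAcoe, hcompy]
  have himg_q : φ '' convexHull ℝ (Set.range z) = convexHull ℝ (Set.range q) := by
    rw [← hφAcoe, AffineMap.image_convexHull, ← Set.range_comp, hφAcoe, hcompz]
  -- measure transport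
  have hmp := hiso.hausdorffMeasure_image (Or.inl (by positivity : (0:ℝ) ≤ m))
      (convexHull ℝ (Set.range y))
  have hmq := hiso.hausdorffMeasure_image (Or.inl (by positivity : (0:ℝ) ≤ m))
      (convexHull ℝ (Set.range z))
  rw [himg_p] at hmp
  rw [himg_q] at hmq
  -- K ⊆ L downstairs
  have hKL : convexHull ℝ (Set.range y) ⊆ convexHull ℝ (Set.range z) := by
    have h1 : convexHull ℝ (Set.range p) ⊆ convexHull ℝ (Set.range q) :=
      convexHull_min hpq (convex_convexHull ℝ _)
    intro w hw
    have : φ w ∈ convexHull ℝ (Set.range q) := by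
      rw [← himg_p] at h1
      exact h1 (Set.mem_image_of_mem φ hw)
    rw [← himg_q] at this
    obtain ⟨w', hw', hww'⟩ := this
    rwa [← hφinj hww']
  -- affine independence of y
  have hyai : AffineIndependent ℝ y := by
    apply AffineIndependent.of_comp φA
    rw [hφAcoe, hcompy]
    exact hp
  -- interior nonempty
  have hint : (interior (convexHull ℝ (Set.range y))).Nonempty := by
    rw [(convex_convexHull ℝ _).interior_nonempty_iff_affineSpan_eq_top, affineSpan_convexHull]
    exact hyai.affineSpan_eq_top_iff_card_eq_finrank_add_one.mpr (by simp)
  -- apply geom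
  have hsub := geom (convex_convexHull ℝ _)
    ((Set.finite_range y).isCompact_convexHull ℝ) hint (convex_convexHull ℝ _) hKL
    (by rw [← hmp, ← hmq]; exact hvol)
  -- conclude
  rintro _ ⟨l, rfl⟩
  rw [← hz l, ← himg_p]
  exact Set.mem_image_of_mem φ (hsub (subset_convexHull ℝ _ (Set.mem_range_self l)))

/-- If `C`, `W` are column-stochastic, `C` has full column rank and `W` satisfies the
separability condition, then `(C, W)` is identifiable. -/
theorem stmt1 {V k d : ℕ} (C : Matrix (Fin V) (Fin k) ℝ) (W : Matrix (Fin k) (Fin d) ℝ)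
    (hC : colStoch C) (hW : colStoch W) (hrank : C.rank = k) (hsep : Separable W) :
    Identifiable C W := by
  classical
  intro Cb Wb hCb hWb heq hvol
  obtain _ | m := k
  · exact dis_zero C Cb ⟨1, by ext i j; exact j.elim0⟩
  obtain ⟨g, hginj, hg⟩ := hsep
  set p : Fin (m+1) → EuclideanSpace ℝ (Fin V) := fun j => WithLp.toLp 2 (fun i => C i j) with hpdef
  set q : Fin (m+1) → EuclideanSpace ℝ (Fin V) := fun j => WithLp.toLp 2 (fun i => Cb i j) with hqdef
  have hcolsC : cols C = Set.range p := rfl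
  have hcolsCb : cols Cb = Set.range q := rfl
  -- C = Cb * Amat
  set Amat : Matrix (Fin (m+1)) (Fin (m+1)) ℝ := Matrix.of fun l j => Wb l (g j) with hAm
  have hAstoch : colStoch Amat := ⟨fun l j => hWb.1 _ _, fun j => hWb.2 (g j)⟩
  have hCA : C = Cb * Amat := by
    ext i j
    have h1 : (C * W) i (g j) = C i j := by
      simp only [Matrix.mul_apply, hg, mul_ite, mul_one, mul_zero]
      simp
    have h2 : (Cb * Wb) i (g j) = (Cb * Amat) i j := by
      simp [Matrix.mul_apply, hAm]
    rw [← h1, heq, h2]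
  -- range p ⊆ convexHull range q
  have hp_sub : Set.range p ⊆ convexHull ℝ (Set.range q) := by
    rintro _ ⟨j, rfl⟩
    have hmem := Finset.centerMass_mem_convexHull (Finset.univ : Finset (Fin (m+1)))
      (w := fun l => Amat l j) (fun l _ => hAstoch.1 l j)
      (by rw [hAstoch.2 j]; norm_num) (z := q) (fun l _ => Set.mem_range_self l)
    rw [Finset.centerMass_eq_of_sum_1 _ _ (hAstoch.2 j)] at hmem
    have hpj : p j = ∑ l, Amat l j • q l := by
      ext i
      have hsum : (∑ l, Amat l j • q l) i = ∑ l, Amat l j * Cb i l := by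
        rw [WithLp.ofLp_sum, Finset.sum_apply]; simp [hqdef, mul_comm]
      rw [hsum]
      have := congrFun (congrFun hCA i) j
      simpa [Matrix.mul_apply, hAm, mul_comm] using this
    rw [← hpj] at hmem
    exact hmem
  -- injectivity of mulVecLin
  have hmulinj : Function.Injective C.mulVecLin := by
    rw [← LinearMap.ker_eq_bot]
    have hrn := LinearMap.finrank_range_add_finrank_ker C.mulVecLin
    rw [show Module.finrank ℝ (LinearMap.range C.mulVecLin) = m + 1 from hrank] at hrn
    simp only [Module.finrank_pi, Fintype.card_fin] at hrn
    have hker : Module.finrank ℝ (LinearMap.ker C.mulVecLin) = 0 := by omega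
    exact Submodule.finrank_eq_zero.mp hker
  -- linear independence of columns
  have hlin : ∀ w : Fin (m+1) → ℝ, ∑ j, w j • p j = 0 → ∀ j, w j = 0 := by
    intro w hw j
    have hmv : C.mulVecLin w = C.mulVecLin 0 := by
      rw [map_zero]
      funext i
      have := congrArg (fun x => x i) hw
      rw [WithLp.ofLp_sum, Finset.sum_apply] at this
      simpa [Matrix.mulVecLin, Matrix.mulVec, dotProduct, hpdef, mul_comm] using this
    have := hmulinj hmv
    rw [this]; rfl
  have haff : AffineIndependent ℝ p := by
    rw [affineIndependent_iff]
    intro s w hw0 hsum e he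
    have h3 : ∑ j, (if j ∈ s then w j else 0) • p j = 0 := by
      have h3' : ∑ j, (if j ∈ s then w j else 0) • p j = ∑ j ∈ s, w j • p j := by
        simp only [ite_smul, zero_smul]
        rw [← Finset.sum_filter, Finset.filter_mem_eq_inter, Finset.univ_inter]
      rw [h3']; exact hsum
    have := hlin _ h3 e
    rwa [if_pos he] at this
  -- volume inequality with exponent m
  have hvol' : μH[(m:ℝ)] (convexHull ℝ (Set.range q)) ≤ μH[(m:ℝ)] (convexHull ℝ (Set.range p)) := by
    have hcast : ((m+1 : ℕ) : ℝ) - 1 = (m : ℝ) := by push_cast; ring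
    have h4 : convVol Cb = μH[(m:ℝ)] (convexHull ℝ (Set.range q)) := by
      rw [convVol, hcolsCb, hcast]
    have h5 : convVol C = μH[(m:ℝ)] (convexHull ℝ (Set.range p)) := by
      rw [convVol, hcolsC, hcast]
    rw [← h4, ← h5]; exact hvol
  have hq_sub : Set.range q ⊆ convexHull ℝ (Set.range p) := key_subset p q haff hp_sub hvol'
  -- build B
  have hBex : ∀ l : Fin (m+1), ∃ w : Fin (m+1) → ℝ,
      (∀ jj, 0 ≤ w jj) ∧ ∑ jj, w jj = 1 ∧ q l = ∑ jj, w jj • p jj := by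
    intro l
    have hml := hq_sub (Set.mem_range_self l)
    rw [convexHull_range_eq_exists_affineCombination] at hml
    obtain ⟨s, w, hw0, hw1, hwc⟩ := hml
    refine ⟨fun jj => if jj ∈ s then w jj else 0, fun jj => ?_, ?_, ?_⟩
    · by_cases hjj : jj ∈ s
      · simpa [hjj] using hw0 jj hjj
      · simp [hjj]
    · rw [← Finset.sum_filter, Finset.filter_mem_eq_inter, Finset.univ_inter]; exact hw1
    · rw [← hwc, s.affineCombination_eq_linear_combination p w hw1]
      simp only [ite_smul, zero_smul]
      rw [← Finset.sum_filter, Finset.filter_mem_eq_inter, Finset.univ_inter]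
  choose wB hwB0 hwB1 hwBc using hBex
  set Bm : Matrix (Fin (m+1)) (Fin (m+1)) ℝ := Matrix.of fun jj l => wB l jj with hBm
  have hBstoch : colStoch Bm := ⟨fun jj l => hwB0 l jj, fun l => hwB1 l⟩
  have hCbB : Cb = C * Bm := by
    ext i l
    have := congrArg (fun x => x i) (hwBc l)
    rw [WithLp.ofLp_sum, Finset.sum_apply] at this
    simpa [Matrix.mul_apply, hBm, hpdef, hqdef, mul_comm] using this
  -- Bm * Amat = 1
  have hcancel : ∀ M N : Matrix (Fin (m+1)) (Fin (m+1)) ℝ, C * M = C * N → M = N := by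
    intro M N h
    ext a b
    have hcol : C.mulVecLin (fun r => M r b) = C.mulVecLin (fun r => N r b) := by
      funext i
      have := congrFun (congrFun h i) b
      simpa [Matrix.mulVecLin, Matrix.mulVec, dotProduct, Matrix.mul_apply] using this
    exact congrFun (hmulinj hcol) a
  have hBA : Bm * Amat = 1 := by
    apply hcancel
    rw [Matrix.mul_one, ← Matrix.mul_assoc, ← hCbB, ← hCA]
  obtain ⟨σ, hσ⟩ := stoch_inv_perm hBstoch hAstoch hBA
  apply dis_zero
  refine ⟨σ, ?_⟩
  ext i l
  have := congrFun (congrFun hCbB i) l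
  rw [this]
  simp [Matrix.mul_apply, hσ, Matrix.submatrix_apply]
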